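/- Define linear functionals on the ring of symmetric functions by φ^LA(S_ν) = (z)_ν (z')_ν · dim ν / |ν|!, where (z)_ν = Π_{□∈ν}(z + c(□)) and dim ν is the number of standard Young tableaux of shape ν. Then for the Laguerre symmetric function 𝔏_ν = Σ_{μ⊆ν} (-1)^{|ν|-|μ|} (dim ν/μ)/(|ν|-|μ|)! (z)_{ν/μ}(z')_{ν/μ} S_μ, one has φ^LA(𝔏_ν) = δ_{ν,∅}. -/

import Mathlib

open scoped Classical

/-- A finite set of boxes `(row, column)` (0-indexed) is a Young diagram if it is a
lower set in the coordinatewise order. -/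
def IsYD (s : Finset (ℕ × ℕ)) : Prop :=
  ∀ p ∈ s, ∀ q : ℕ × ℕ, q.1 ≤ p.1 → q.2 ≤ p.2 → q ∈ s

/-- Young diagrams (= partitions). -/
def YD : Type := {s : Finset (ℕ × ℕ) // IsYD s}

/-- `skewDim n μ ν` counts the chains of diagrams from `ν` down to `μ` removing one
corner box at a time in `n` steps; for `n = |ν| - |μ|` this is the number `dim ν/μ`
of standard Young tableaux of skew shape `ν/μ`. -/
noncomputable def skewDim : ℕ → Finset (ℕ × ℕ) → Finset (ℕ × ℕ) → ℕ
  | 0, μ, ν => if μ = ν then 1 else 0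
  | n + 1, μ, ν =>
      ∑ p ∈ ν.filter (fun p => IsYD (ν.erase p) ∧ μ ⊆ ν.erase p),
        skewDim n μ (ν.erase p)

/-- `dim ν`, the number of standard Young tableaux of shape `ν`. -/
noncomputable def dimYD (s : Finset (ℕ × ℕ)) : ℕ := skewDim s.card ∅ s

/-- `(z)_s = ∏_{□ ∈ s} (z + c(□))` with `c(i,j) = j - i` the content. -/
noncomputable def contentPoch (z : ℂ) (s : Finset (ℕ × ℕ)) : ℂ :=
  ∏ p ∈ s, (z + (p.2 : ℂ) - (p.1 : ℂ))

/-- The Laguerre symmetric function `𝔏_ν`, expanded in the Schur basis `S_μ`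
(encoded as `Finsupp.single μ 1` in the free module `YD →₀ ℂ` with basis the
Schur functions). -/
noncomputable def LagSF (z z' : ℂ) (ν : YD) : YD →₀ ℂ :=
  ∑ s ∈ (ν.1.powerset.filter IsYD).attach,
    ((-1 : ℂ) ^ (ν.1.card - s.1.card) *
        (skewDim (ν.1.card - s.1.card) s.1 ν.1 : ℂ) /
          (Nat.factorial (ν.1.card - s.1.card) : ℂ) *
        contentPoch z (ν.1 \ s.1) * contentPoch z' (ν.1 \ s.1)) •
      Finsupp.single (⟨s.1, (Finset.mem_filter.mp s.2).2⟩ : YD) (1 : ℂ)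

/-- The formal moment functional `φ^LA`, i.e. the linear functional on symmetric
functions determined on the Schur basis by
`φ^LA(S_ν) = (z)_ν (z')_ν dim ν / |ν|!`. -/
noncomputable def phiLA (z z' : ℂ) (F : YD →₀ ℂ) : ℂ :=
  F.sum fun ν a =>
    a * (contentPoch z ν.1 * contentPoch z' ν.1 * (dimYD ν.1 : ℂ) /
      (Nat.factorial ν.1.card : ℂ))

open Finset
lemma skewDim_eq_zero_of_not_subset {n : ℕ} {μ ν : Finset (ℕ × ℕ)} (h : ¬ μ ⊆ ν) :
    skewDim n μ ν = 0 := by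
  cases n with
  | zero =>
    simp only [skewDim]
    rw [if_neg]; rintro rfl; exact h subset_rfl
  | succ n =>
    simp only [skewDim]
    refine Finset.sum_eq_zero fun p hp => ?_
    rw [Finset.mem_filter] at hp
    exact absurd (hp.2.2.trans (Finset.erase_subset _ _)) h

lemma skewDim_eq_zero_of_card : ∀ (n : ℕ) (μ ν : Finset (ℕ × ℕ)),
    ν.card ≠ μ.card + n → skewDim n μ ν = 0
  | 0, μ, ν, h => by
    simp only [skewDim]; rw [if_neg]; rintro rfl; omega
  | n+1, μ, ν, h => by
    simp only [skewDim]
    refine Finset.sum_eq_zero fun p hp => ?_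
    rw [Finset.mem_filter] at hp
    have hc := Finset.card_erase_of_mem hp.1
    have hpos : 0 < ν.card := Finset.card_pos.mpr ⟨p, hp.1⟩
    exact skewDim_eq_zero_of_card n μ _ (by omega)

lemma skewDim_eq_zero_of_not_yd : ∀ (n : ℕ) (μ ν : Finset (ℕ × ℕ)),
    IsYD ν → ¬ IsYD μ → skewDim n μ ν = 0
  | 0, μ, ν, hν, hμ => by
    simp only [skewDim]; rw [if_neg]; rintro rfl; exact hμ hν
  | n+1, μ, ν, hν, hμ => by
    simp only [skewDim]
    refine Finset.sum_eq_zero fun p hp => ?_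
    rw [Finset.mem_filter] at hp
    exact skewDim_eq_zero_of_not_yd n μ _ hp.2.1 hμ

lemma skewDim_chain (b : ℕ) (ρ : Finset (ℕ × ℕ)) :
    ∀ (a : ℕ) (ν : Finset (ℕ × ℕ)), IsYD ν →
    skewDim (a + b) ρ ν = ∑ μ ∈ ν.powerset, skewDim a μ ν * skewDim b ρ μ := by
  intro a
  induction a with
  | zero =>
    intro ν hν
    rw [Nat.zero_add]
    have : ∀ μ ∈ ν.powerset, skewDim 0 μ ν * skewDim b ρ μ
        = if μ = ν then skewDim b ρ μ else 0 := by
      intro μ _; simp only [skewDim]; split_ifs <;> simp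
    rw [Finset.sum_congr rfl this, Finset.sum_ite_eq' ν.powerset ν (fun μ => skewDim b ρ μ),
      if_pos (Finset.mem_powerset.mpr subset_rfl)]
  | succ a ih =>
    intro ν hν
    have h1 : a + 1 + b = (a + b) + 1 := by omega
    rw [h1]
    show (∑ p ∈ ν.filter (fun p => IsYD (ν.erase p) ∧ ρ ⊆ ν.erase p),
        skewDim (a + b) ρ (ν.erase p)) = _
    have h2 : ∀ p ∈ ν.filter (fun p => IsYD (ν.erase p) ∧ ρ ⊆ ν.erase p),
        skewDim (a + b) ρ (ν.erase p)
          = ∑ μ ∈ ν.powerset, skewDim a μ (ν.erase p) * skewDim b ρ μ := by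
      intro p hp
      rw [Finset.mem_filter] at hp
      rw [ih _ hp.2.1]
      refine Finset.sum_subset (Finset.powerset_mono.mpr (Finset.erase_subset _ _)) ?_
      intro μ _ hμ
      rw [Finset.mem_powerset] at hμ
      rw [skewDim_eq_zero_of_not_subset hμ, zero_mul]
    rw [Finset.sum_congr rfl h2, Finset.sum_comm]
    refine Finset.sum_congr rfl fun μ hμ => ?_
    by_cases hb : skewDim b ρ μ = 0
    · simp [hb]
    · have hρμ : ρ ⊆ μ := by
        by_contra h
        exact hb (skewDim_eq_zero_of_not_subset h)
      rw [← Finset.sum_mul]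
      congr 1
      show _ = skewDim (a+1) μ ν
      simp only [skewDim]
      refine (Finset.sum_subset ?_ ?_).symm
      · intro p hp
        rw [Finset.mem_filter] at hp ⊢
        exact ⟨hp.1, hp.2.1, hρμ.trans hp.2.2⟩
      · intro p hp1 hp2
        rw [Finset.mem_filter] at hp1 hp2
        push_neg at hp2
        exact skewDim_eq_zero_of_not_subset (hp2 hp1.1 hp1.2.1)

lemma alt_sum (n : ℕ) :
    ∑ k ∈ range (n+1), (-1:ℂ)^(n-k) * (n.choose k : ℂ) = if n = 0 then 1 else 0 := by
  have h1 : ∀ k ∈ range (n+1), (-1:ℂ)^(n-k) * (n.choose k : ℂ)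
      = (-1:ℂ)^n * ((-1:ℂ)^k * (n.choose k : ℂ)) := by
    intro k hk
    rw [mem_range] at hk
    have hnk : n - k + 2 * k = n + k := by omega
    have h2 : (-1:ℂ)^(n-k) = (-1:ℂ)^n * (-1:ℂ)^k := by
      rw [← pow_add]
      calc (-1:ℂ)^(n-k) = (-1:ℂ)^(n-k) * ((-1:ℂ)^2)^k := by norm_num
        _ = (-1:ℂ)^(n-k+2*k) := by rw [← pow_mul, ← pow_add]
        _ = (-1:ℂ)^(n+k) := by rw [hnk]
    rw [h2]; ring
  rw [Finset.sum_congr rfl h1, ← Finset.mul_sum]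
  have h3 : ∑ k ∈ range (n+1), (-1:ℂ)^k * (n.choose k : ℂ) = if n = 0 then 1 else 0 := by
    have := Int.alternating_sum_range_choose (n := n)
    have := congrArg (Int.cast : ℤ → ℂ) this
    push_cast at this
    rw [this]
  rw [h3]
  split_ifs with h
  · subst h; norm_num
  · ring

lemma key (ν : Finset (ℕ × ℕ)) (hν : IsYD ν) :
    ∑ s ∈ ν.powerset.filter IsYD,
      ((-1:ℂ)^(ν.card - s.card) * (skewDim (ν.card - s.card) s ν : ℂ) /
        ((ν.card - s.card).factorial : ℂ) * ((dimYD s : ℂ) / ((s.card).factorial : ℂ)))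
      = if ν = ∅ then 1 else 0 := by
  set n := ν.card with hn
  -- extend over the full powerset
  rw [Finset.sum_filter_of_ne (by
    intro s hs hf
    by_contra hys
    rw [skewDim_eq_zero_of_not_yd _ _ _ hν hys] at hf
    simp at hf)]
  rw [Finset.powerset_card_disjiUnion]
  erw [Finset.sum_disjiUnion]
  have hinner : ∀ k ∈ range (n+1),
      (∑ s ∈ Finset.powersetCard k ν,
        ((-1:ℂ)^(n - s.card) * (skewDim (n - s.card) s ν : ℂ) /
          ((n - s.card).factorial : ℂ) * ((dimYD s : ℂ) / ((s.card).factorial : ℂ))))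
      = (dimYD ν : ℂ) / (n.factorial : ℂ) * ((-1:ℂ)^(n-k) * (n.choose k : ℂ)) := by
    intro k hk
    rw [mem_range] at hk
    have hk' : k ≤ n := by omega
    have step1 : ∀ s ∈ Finset.powersetCard k ν,
        ((-1:ℂ)^(n - s.card) * (skewDim (n - s.card) s ν : ℂ) /
          ((n - s.card).factorial : ℂ) * ((dimYD s : ℂ) / ((s.card).factorial : ℂ)))
        = (-1:ℂ)^(n-k) / (((n-k).factorial : ℂ) * (k.factorial : ℂ)) *
            ((skewDim (n-k) s ν * skewDim k ∅ s : ℕ) : ℂ) := by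
      intro s hs
      rw [Finset.mem_powersetCard] at hs
      rw [hs.2]
      simp only [dimYD, hs.2]
      push_cast
      ring
    rw [Finset.sum_congr rfl step1, ← Finset.mul_sum, ← Nat.cast_sum]
    have step2 : ∑ s ∈ Finset.powersetCard k ν, skewDim (n-k) s ν * skewDim k ∅ s
        = ∑ s ∈ ν.powerset, skewDim (n-k) s ν * skewDim k ∅ s := by
      refine Finset.sum_subset ?_ ?_
      · intro s hs
        rw [Finset.mem_powersetCard] at hs
        exact Finset.mem_powerset.mpr hs.1
      · intro s hs1 hs2
        rw [Finset.mem_powerset] at hs1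
        rw [Finset.mem_powersetCard] at hs2
        push_neg at hs2
        have hsc : s.card ≠ k := hs2 hs1
        have hle : s.card ≤ n := hn ▸ Finset.card_le_card hs1
        rw [skewDim_eq_zero_of_card _ _ _ (by omega), zero_mul]
    rw [step2, ← skewDim_chain k ∅ (n-k) ν hν]
    have : n - k + k = n := by omega
    rw [this]
    have hdim : skewDim n ∅ ν = dimYD ν := rfl
    rw [hdim]
    have hfac : ((n.choose k : ℂ)) * (k.factorial : ℂ) * (((n-k).factorial : ℂ)) = (n.factorial : ℂ) := by
      exact_mod_cast congrArg (Nat.cast : ℕ → ℂ) (Nat.choose_mul_factorial_mul_factorial hk')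
    have h1 : ((n-k).factorial : ℂ) ≠ 0 := Nat.cast_ne_zero.mpr (Nat.factorial_ne_zero _)
    have h2 : (k.factorial : ℂ) ≠ 0 := Nat.cast_ne_zero.mpr (Nat.factorial_ne_zero _)
    have h3 : (n.factorial : ℂ) ≠ 0 := Nat.cast_ne_zero.mpr (Nat.factorial_ne_zero _)
    field_simp
    linear_combination (-(dimYD ν : ℂ)) * hfac
  rw [Finset.sum_congr rfl hinner, ← Finset.mul_sum, alt_sum]
  by_cases hempty : ν = ∅
  · subst hempty
    simp only [hn]
    norm_num [dimYD, skewDim]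
  · have hn0 : n ≠ 0 := by
      simpa [hn, Finset.card_eq_zero] using hempty
    rw [if_neg hn0, if_neg hempty, mul_zero]

lemma lc_smul_single_aux (w : YD → ℂ) (c : ℂ) (μ : YD) :
    Finsupp.linearCombination ℂ w (c • Finsupp.single μ (1:ℂ)) = c * w μ := by
  simp

/-- `φ^LA(𝔏_ν) = δ_{ν,∅}`. -/
theorem phiLA_LagSF (z z' : ℂ) (ν : YD) :
    phiLA z z' (LagSF z z' ν) = if ν.1 = ∅ then 1 else 0 := by
  classical
  set w : YD → ℂ := fun μ => contentPoch z μ.1 * contentPoch z' μ.1 * (dimYD μ.1 : ℂ) /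
      (Nat.factorial μ.1.card : ℂ) with hw
  have hphi : phiLA z z' (LagSF z z' ν) = Finsupp.linearCombination ℂ w (LagSF z z' ν) := by
    rw [Finsupp.linearCombination_apply]
    simp [phiLA, Finsupp.sum, smul_eq_mul, hw]
  rw [hphi, LagSF]
  erw [map_sum]
  erw [Finset.sum_congr rfl (fun x _ => lc_smul_single_aux _ _ _)]
  simp only [hw]
  have hattach := Finset.sum_attach (ν.1.powerset.filter IsYD)
    (fun s => ((-1 : ℂ) ^ (ν.1.card - s.card) *
        (skewDim (ν.1.card - s.card) s ν.1 : ℂ) /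
          (Nat.factorial (ν.1.card - s.card) : ℂ) *
        contentPoch z (ν.1 \ s) * contentPoch z' (ν.1 \ s)) *
      (contentPoch z s * contentPoch z' s * (dimYD s : ℂ) / (Nat.factorial s.card : ℂ)))
  erw [hattach]
  have hsub : ∀ s ∈ ν.1.powerset.filter IsYD,
      ((-1 : ℂ) ^ (ν.1.card - s.card) *
        (skewDim (ν.1.card - s.card) s ν.1 : ℂ) /
          (Nat.factorial (ν.1.card - s.card) : ℂ) *
        contentPoch z (ν.1 \ s) * contentPoch z' (ν.1 \ s)) *
      (contentPoch z s * contentPoch z' s * (dimYD s : ℂ) / (Nat.factorial s.card : ℂ))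
      = contentPoch z ν.1 * contentPoch z' ν.1 *
        ((-1:ℂ)^(ν.1.card - s.card) * (skewDim (ν.1.card - s.card) s ν.1 : ℂ) /
          ((ν.1.card - s.card).factorial : ℂ) *
          ((dimYD s : ℂ) / ((s.card).factorial : ℂ))) := by
    intro s hs
    rw [Finset.mem_filter, Finset.mem_powerset] at hs
    have hz : contentPoch z (ν.1 \ s) * contentPoch z s = contentPoch z ν.1 :=
      Finset.prod_sdiff hs.1
    have hz' : contentPoch z' (ν.1 \ s) * contentPoch z' s = contentPoch z' ν.1 :=
      Finset.prod_sdiff hs.1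
    rw [← hz, ← hz']
    ring
  erw [Finset.sum_congr rfl hsub, ← Finset.mul_sum, key ν.1 ν.2]
  by_cases hempty : ν.1 = ∅
  · simp [hempty, contentPoch]
  · simp [hempty]
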